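/- Let (L, Φ, Σ) be a comonad over dom on the arrow category of a category C with pushouts. Given an L-coalgebra (f, s) with f : A → B and a morphism h : A → C in C, form the pushout g : C → D of f along h. Then g admits an L-coalgebra structure (g, t), given by the map t : D → Eg induced by the pushout from λ_g : C → Eg and E(h, k) ∘ s : B → Eg, such that the pushout square (h, k) : (f, s) → (g, t) is a morphism of L-coalgebras; moreover (h, k) is cocartesian for the projection dom ∘ U_L : L-Map → C. -/

import Mathlib

open CategoryTheory CategoryTheory.Limits

universe v u

variable {C : Type u} [Category.{v} C]

/-- A coalgebra structure (over `dom`) for a comonad `L` over `dom` on the arrow category. -/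
def IsCoalg (L : Comonad (Arrow C))
    (hL : L.toFunctor ⋙ Arrow.leftFunc = Arrow.leftFunc)
    {f : Arrow C} (θ : f ⟶ L.obj f) : Prop :=
  θ.left = eqToHom ((Functor.congr_obj hL f).symm) ∧
  θ ≫ L.ε.app f = 𝟙 f ∧
  θ ≫ L.δ.app f = θ ≫ L.map θ

lemma Lmap_left (L : Comonad (Arrow C))
    (hL : L.toFunctor ⋙ Arrow.leftFunc = Arrow.leftFunc)
    {a b : Arrow C} (u : a ⟶ b) :
    (L.map u).left = eqToHom (show (L.obj a).left = a.left from Functor.congr_obj hL a) ≫ u.left ≫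
      eqToHom (show b.left = (L.obj b).left from (Functor.congr_obj hL b).symm) :=
  Functor.congr_hom hL u

/-- Two arrow-category morphisms out of the `inr` leg of a pushout agree as soon as their
left components agree and their composites with the pushout square agree. -/
lemma pushout_arrow_ext [HasPushouts C] {f : Arrow C} {Cobj : C} (h : f.left ⟶ Cobj)
    {b : Arrow C} (A B : Arrow.mk (pushout.inr f.hom h) ⟶ b)
    (h1 : A.left = B.left)
    (h2 : Arrow.homMk (u := h) (v := pushout.inl f.hom h) pushout.condition.symm ≫ A =
          Arrow.homMk (u := h) (v := pushout.inl f.hom h) pushout.condition.symm ≫ B) :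
    A = B := by
  apply Arrow.hom_ext _ _ h1
  apply pushout.hom_ext
  · exact congrArg CommaMorphism.right h2
  · have wA : pushout.inr f.hom h ≫ A.right = A.left ≫ b.hom := (Arrow.w A).symm
    have wB : pushout.inr f.hom h ≫ B.right = B.left ≫ b.hom := (Arrow.w B).symm
    rw [wA, wB, h1]

/-- `L`-coalgebras for a comonad over `dom` are stable under pushout: given
an `L`-coalgebra structure on `f : A → B` and `h : A → C`, the pushout `g : C → D` of `f`
along `h` carries an `L`-coalgebra structure `t`, induced by the pushout from `λ_g` and
`E(h, k) ∘ s`, making the pushout square a morphism of `L`-coalgebras which is moreover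
cocartesian for the projection `dom ∘ U_L : L-Map → C`. -/
theorem stmt3 [HasPushouts C] (L : Comonad (Arrow C))
    (hL : L.toFunctor ⋙ Arrow.leftFunc = Arrow.leftFunc)
    (hcounit : ∀ f : Arrow C, (L.ε.app f).left = eqToHom (Functor.congr_obj hL f))
    (hcomul : ∀ f : Arrow C,
      (L.δ.app f).left = eqToHom ((Functor.congr_obj hL (L.obj f)).symm))
    (f : Arrow C) (θ : f ⟶ L.obj f) (hθ : IsCoalg L hL θ)
    {Cobj : C} (h : f.left ⟶ Cobj) :
    ∃ θg : Arrow.mk (pushout.inr f.hom h) ⟶ L.obj (Arrow.mk (pushout.inr f.hom h)),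
      IsCoalg L hL θg ∧
      -- the pushout square is a morphism of coalgebras
      (Arrow.homMk (u := h) (v := pushout.inl f.hom h) pushout.condition.symm ≫ θg
          = θ ≫ L.map (Arrow.homMk (u := h) (v := pushout.inl f.hom h)
              pushout.condition.symm)) ∧
      -- the structure map is the one induced by the pushout
      (pushout.inr f.hom h ≫ θg.right =
        eqToHom ((Functor.congr_obj hL (Arrow.mk (pushout.inr f.hom h))).symm) ≫
          (L.obj (Arrow.mk (pushout.inr f.hom h))).hom) ∧
      (pushout.inl f.hom h ≫ θg.right =
        θ.right ≫ (L.map (Arrow.homMk (u := h) (v := pushout.inl f.hom h)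
          pushout.condition.symm)).right) ∧
      -- the pushout square is cocartesian over `dom`
      (∀ (e : Arrow C) (θe : e ⟶ L.obj e), IsCoalg L hL θe →
        ∀ (ψ : f ⟶ e), ψ ≫ θe = θ ≫ L.map ψ →
          ∀ (w : Cobj ⟶ e.left), h ≫ w = ψ.left →
            ∃! φ : Arrow.mk (pushout.inr f.hom h) ⟶ e,
              (φ ≫ θe = θg ≫ L.map φ) ∧ φ.left = w ∧
                Arrow.homMk (u := h) (v := pushout.inl f.hom h)
                  pushout.condition.symm ≫ φ = ψ) := by
  obtain ⟨hθl, hθε, hθδ⟩ := hθ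
  replace hθl : θ.left = eqToHom (show f.left = (L.obj f).left from
      (Functor.congr_obj hL f).symm) := hθl
  replace hcounit : ∀ f : Arrow C, (L.ε.app f).left =
      eqToHom (show (L.obj f).left = f.left from Functor.congr_obj hL f) := hcounit
  replace hcomul : ∀ f : Arrow C, (L.δ.app f).left =
      eqToHom (show (L.obj f).left = (L.obj (L.obj f)).left from
        (Functor.congr_obj hL (L.obj f)).symm) := hcomul
  set g : Arrow C := Arrow.mk (pushout.inr f.hom h) with hg
  set k : f ⟶ g := Arrow.homMk (u := h) (v := pushout.inl f.hom h) pushout.condition.symm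
    with hk
  -- commutativity for the pushout-induced map
  have wcomm : f.hom ≫ θ.right ≫ (L.map k).right =
      h ≫ eqToHom ((Functor.congr_obj hL g).symm) ≫ (L.obj g).hom := by
    rw [← Category.assoc, ← Arrow.w θ, Category.assoc, ← Arrow.w (L.map k),
      hθl, Lmap_left L hL k]
    simp [hk]
    rfl
  let t : (pushout f.hom h) ⟶ (L.obj g).right :=
    pushout.desc (θ.right ≫ (L.map k).right)
      (eqToHom ((Functor.congr_obj hL g).symm) ≫ (L.obj g).hom)
      wcomm
  have ht_inl : pushout.inl f.hom h ≫ t = θ.right ≫ (L.map k).right :=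
    pushout.inl_desc _ _ _
  have ht_inr : pushout.inr f.hom h ≫ t =
      eqToHom ((Functor.congr_obj hL g).symm) ≫ (L.obj g).hom :=
    pushout.inr_desc _ _ _
  have θg_w : eqToHom ((Functor.congr_obj hL g).symm) ≫ (L.obj g).hom = g.hom ≫ t :=
    ht_inr.symm
  set θg : g ⟶ L.obj g := Arrow.homMk (u := eqToHom ((Functor.congr_obj hL g).symm))
    (v := t) θg_w with hθg
  have hθgl : θg.left = eqToHom (show g.left = (L.obj g).left from
      (Functor.congr_obj hL g).symm) := rfl
  -- the pushout square is a morphism of coalgebras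
  have hsq : k ≫ θg = θ ≫ L.map k := by
    apply Arrow.hom_ext
    · simp [hθl, Lmap_left L hL, hk, hθgl]
    · show k.right ≫ t = θ.right ≫ (L.map k).right
      simpa [hk] using ht_inl
  refine ⟨θg, ⟨rfl, ?_, ?_⟩, hsq, ht_inr, ht_inl, ?_⟩
  · -- counit axiom
    apply pushout_arrow_ext h
    · simp [hθgl, hcounit]
    · rw [← hk, ← Category.assoc, hsq, Category.assoc, L.ε.naturality k,
        ← Category.assoc, hθε]
      simp
  · -- comultiplication axiom
    apply pushout_arrow_ext h
    · simp [hθgl, hcomul, Lmap_left L hL]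
    · rw [← hk, ← Category.assoc, hsq, Category.assoc, L.δ.naturality k,
        ← Category.assoc, hθδ, Category.assoc, Functor.comp_map,
        ← L.toFunctor.map_comp, ← hsq, L.toFunctor.map_comp, ← Category.assoc, ← hsq,
        Category.assoc]
  · -- cocartesianness
    intro e θe hθe ψ hψ w hw
    have hθe1 : θe.left = eqToHom (show e.left = (L.obj e).left from
        (Functor.congr_obj hL e).symm) := hθe.1
    have hwcomm : f.hom ≫ ψ.right = h ≫ w ≫ e.hom := by
      rw [← Arrow.w ψ, ← hw, Category.assoc]
    set φ₀ : g ⟶ e := Arrow.homMk (u := w) (v := pushout.desc ψ.right (w ≫ e.hom) hwcomm)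
      (pushout.inr_desc _ _ _).symm with hφ₀
    have hkφ₀ : k ≫ φ₀ = ψ := by
      apply Arrow.hom_ext
      · simpa [hk, hφ₀] using hw
      · show k.right ≫ (pushout.desc ψ.right (w ≫ e.hom) hwcomm) = ψ.right
        exact pushout.inl_desc _ _ _
    refine ⟨φ₀, ⟨?_, rfl, hkφ₀⟩, ?_⟩
    · -- coalgebra morphism
      apply pushout_arrow_ext h
      · simp [hθe1, Lmap_left L hL, hφ₀, hθgl]
      · rw [← hk, ← Category.assoc, hkφ₀, hψ, ← hkφ₀, L.toFunctor.map_comp,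
          ← Category.assoc, ← hsq, Category.assoc]
    · -- uniqueness
      rintro φ ⟨-, hφl, hφk⟩
      apply pushout_arrow_ext h
      · show φ.left = w
        exact hφl
      · rw [← hk, hφk, hkφ₀]
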